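/- arXiv:1602.03700 — 3 statements merged into one kernel-verified Lean document; each statement's English description precedes it below -/
import Mathlib

section
/- Let (G,l) be a finite connected ℕ-labelled graph and (G̃, l̃) its total blow-up graph, obtained by replacing every edge e by a path of l(e) edges each labelled 1. Let C and C̃ denote the groups of Cartier vertex labellings of (G,l) and (G̃,l̃), δ and δ̃ their multidegree operators, ε : ℤ^V → ℤ^Ṽ extension by zero, and ι : C → C̃ linear interpolation. Then the induced map on cokernels ε̄ : coker(δ) → coker(δ̃) is injective. -/
/-- A multigraph: vertices `V`, edges `E`, source/target maps (loops and multiple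
edges allowed). -/
structure Multigraph (V E : Type*) where
  s : E → V
  t : E → V

namespace Multigraph

variable {V E : Type*} (G : Multigraph V E)

/-- The edge `e` has endpoints `a` and `b`. -/
def Connects (e : E) (a b : V) : Prop :=
  (G.s e = a ∧ G.t e = b) ∨ (G.s e = b ∧ G.t e = a)

/-- Two vertices are connected by a walk. -/
def Reachable : V → V → Prop :=
  Relation.ReflTransGen (fun a b => ∃ e, G.Connects e a b)

/-- The graph is connected. -/
def Connected : Prop := ∀ a b : V, G.Reachable a b

/-- The cyclic successor on `Fin m`. -/
def cyc {m : ℕ} (i : Fin m) : Fin m :=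
  ⟨(i.1 + 1) % m, Nat.mod_lt _ (Nat.lt_of_le_of_lt (Nat.zero_le _) i.isLt)⟩

/-- A circuit: a closed walk with all edges and vertices distinct. -/
def IsCircuit {m : ℕ} (v : Fin m → V) (ed : Fin m → E) : Prop :=
  0 < m ∧ Function.Injective v ∧ Function.Injective ed ∧
    ∀ i, G.Connects (ed i) (v i) (v (cyc i))

/-- `(G, l)` is circuit-coprime: the labels of the edges of any circuit have gcd `1`. -/
def CircuitCoprime (l : E → ℕ) : Prop :=
  ∀ (m : ℕ) (v : Fin m → V) (ed : Fin m → E), G.IsCircuit v ed →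
    Finset.univ.gcd (fun i : Fin m => l (ed i)) = 1

/-- A vertex labelling `φ : V → ℤ` is Cartier (w.r.t. the edge labelling `l`) if for every
edge `e` with endpoints `v, w`, `l e` divides `φ v - φ w`. -/
def Cartier (l : E → ℕ) (φ : V → ℤ) : Prop :=
  ∀ e : E, (l e : ℤ) ∣ (φ (G.s e) - φ (G.t e))

/-- The multidegree operator: `(mdeg l φ) v` is the sum over edges `e` incident to `v` of
`(φ w - φ v) / l e`, `w` being the other endpoint of `e`.  For the constant labelling `1`
this is the graph Laplacian. -/
def mdeg [Fintype E] [DecidableEq V] (l : E → ℕ) (φ : V → ℤ) : V → ℤ := fun v =>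
  ∑ e : E,
    ((if G.s e = v then (φ (G.t e) - φ (G.s e)) / (l e : ℤ) else 0) +
      (if G.t e = v then (φ (G.s e) - φ (G.t e)) / (l e : ℤ) else 0))

/-- The total blow-up graph `(G̃, l̃)` of `(G, l)`: every edge `e` is replaced by a path of
`l e` edges (all labelled `1`), introducing `l e - 1` new vertices. -/
def blowup (l : E → ℕ) :
    Multigraph (V ⊕ Σ e : E, Fin (l e - 1)) (Σ e : E, Fin (l e)) where
  s := fun p =>
    if h : (p.2 : ℕ) = 0 then Sum.inl (G.s p.1)
    else Sum.inr ⟨p.1, ⟨(p.2 : ℕ) - 1, by have := p.2.isLt; omega⟩⟩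
  t := fun p =>
    if h : (p.2 : ℕ) = l p.1 - 1 then Sum.inl (G.t p.1)
    else Sum.inr ⟨p.1, ⟨(p.2 : ℕ), by have := p.2.isLt; omega⟩⟩

/-- The `j`-th vertex `w_j` (for `0 ≤ j ≤ l e`) of the path in the total blow-up graph
replacing the edge `e`; `w_0` and `w_(l e)` are the old endpoints of `e`. -/
def pathVertex (l : E → ℕ) (e : E) (j : ℕ) : V ⊕ Σ e : E, Fin (l e - 1) :=
  if h0 : j = 0 then Sum.inl (G.s e)
  else if h : j < l e then Sum.inr ⟨e, ⟨j - 1, by omega⟩⟩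
  else Sum.inl (G.t e)

end Multigraph

set_option linter.unusedSectionVars false
namespace Multigraph
variable {V E : Type*} [Fintype V] [Fintype E] [DecidableEq V] [DecidableEq E]
  (G : Multigraph V E) (l : E → ℕ)


lemma my_blowup_s (p : Σ e : E, Fin (l e)) :
    (G.blowup l).s p = G.pathVertex l p.1 p.2 := by
  obtain ⟨e, k⟩ := p
  have hk := k.isLt
  simp only [blowup, pathVertex]
  split_ifs <;> first | rfl | omega | exact (‹False›).elim

lemma my_blowup_t (p : Σ e : E, Fin (l e)) :
    (G.blowup l).t p = G.pathVertex l p.1 ((p.2 : ℕ) + 1) := by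
  obtain ⟨e, k⟩ := p
  have hk := k.isLt
  simp only [blowup, pathVertex]
  split_ifs <;> first | rfl | omega | exact (‹False›).elim

lemma my_pv_eq_inr_iff (e : E) (i : Fin (l e - 1)) (j : ℕ) :
    G.pathVertex l e j = Sum.inr ⟨e, i⟩ ↔ j = (i : ℕ) + 1 := by
  have hi := i.isLt
  simp only [pathVertex]
  split_ifs with h0 h1
  · refine iff_of_false (by simp) (by omega)
  · rw [Sum.inr.injEq, Sigma.mk.inj_iff]
    simp only [heq_eq_eq, Fin.mk.injEq, true_and, Fin.ext_iff]
    omega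
  · refine iff_of_false (by simp) (by omega)

lemma my_pv_ne_inr (e e' : E) (h : e ≠ e') (i : Fin (l e' - 1)) (j : ℕ) :
    G.pathVertex l e j ≠ Sum.inr ⟨e', i⟩ := by
  simp only [pathVertex]
  split_ifs <;> simp [Sigma.mk.inj_iff, h]

lemma my_pv_eq_inl_iff (e : E) (hle : 1 ≤ l e) (v : V) (j : ℕ) :
    G.pathVertex l e j = Sum.inl v ↔ (j = 0 ∧ G.s e = v) ∨ (l e ≤ j ∧ G.t e = v) := by
  simp only [pathVertex]
  split_ifs with h0 h1
  · simp only [Sum.inl.injEq, h0]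
    constructor
    · intro hv; exact Or.inl ⟨trivial, hv⟩
    · rintro (⟨-, hv⟩ | ⟨hv, -⟩)
      · exact hv
      · omega
  · refine iff_of_false (by simp) ?_
    rintro (⟨h, -⟩ | ⟨h, -⟩) <;> omega
  · simp only [Sum.inl.injEq]
    constructor
    · intro hv; exact Or.inr ⟨by omega, hv⟩
    · rintro (⟨hv, -⟩ | ⟨-, hv⟩)
      · omega
      · exact hv
end Multigraph

namespace Multigraph
variable {V E : Type*} [Fintype V] [Fintype E] [DecidableEq V] [DecidableEq E]
  (G : Multigraph V E) (l : E → ℕ)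

lemma my_mdeg_blowup_apply (ψ : (V ⊕ Σ e : E, Fin (l e - 1)) → ℤ)
    (w : V ⊕ Σ e : E, Fin (l e - 1)) :
    (G.blowup l).mdeg (fun _ => 1) ψ w =
      ∑ e : E, ∑ k : Fin (l e),
        ((if G.pathVertex l e k = w then
            ψ (G.pathVertex l e ((k : ℕ) + 1)) - ψ (G.pathVertex l e k) else 0) +
         (if G.pathVertex l e ((k : ℕ) + 1) = w then
            ψ (G.pathVertex l e k) - ψ (G.pathVertex l e ((k : ℕ) + 1)) else 0)) := by
  rw [mdeg, ← Finset.univ_sigma_univ, Finset.sum_sigma]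
  refine Finset.sum_congr rfl fun e _ => Finset.sum_congr rfl fun k _ => ?_
  rw [my_blowup_s, my_blowup_t]
  simp

lemma my_mdeg_blowup_inr (ψ : (V ⊕ Σ e : E, Fin (l e - 1)) → ℤ) (e : E) (i : Fin (l e - 1)) :
    (G.blowup l).mdeg (fun _ => 1) ψ (Sum.inr ⟨e, i⟩) =
      (ψ (G.pathVertex l e ((i : ℕ) + 2)) - ψ (G.pathVertex l e ((i : ℕ) + 1))) +
      (ψ (G.pathVertex l e (i : ℕ)) - ψ (G.pathVertex l e ((i : ℕ) + 1))) := by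
  have hi := i.isLt
  rw [my_mdeg_blowup_apply]
  rw [Finset.sum_eq_single e]
  · rw [Finset.sum_add_distrib]
    have c1 : ∀ k : Fin (l e), (G.pathVertex l e (k : ℕ) = Sum.inr ⟨e, i⟩)
        ↔ (k = (⟨(i : ℕ) + 1, by omega⟩ : Fin (l e))) := by
      intro k
      rw [my_pv_eq_inr_iff]
      simp [Fin.ext_iff]
    have c2 : ∀ k : Fin (l e), (G.pathVertex l e ((k : ℕ) + 1) = Sum.inr ⟨e, i⟩)
        ↔ (k = (⟨(i : ℕ), by omega⟩ : Fin (l e))) := by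
      intro k
      rw [my_pv_eq_inr_iff]
      simp [Fin.ext_iff]
    simp only [c1, c2, Finset.sum_ite_eq' Finset.univ, Finset.mem_univ, if_true]
  · intro e' _ he'
    refine Finset.sum_eq_zero fun k _ => ?_
    rw [if_neg (my_pv_ne_inr G l e' e he' i _), if_neg (my_pv_ne_inr G l e' e he' i _)]
    simp
  · simp

lemma my_mdeg_blowup_inl (hl : ∀ e, 1 ≤ l e) (ψ : (V ⊕ Σ e : E, Fin (l e - 1)) → ℤ) (v : V) :
    (G.blowup l).mdeg (fun _ => 1) ψ (Sum.inl v) =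
      ∑ e : E,
        ((if G.s e = v then ψ (G.pathVertex l e 1) - ψ (G.pathVertex l e 0) else 0) +
         (if G.t e = v then
            ψ (G.pathVertex l e (l e - 1)) - ψ (G.pathVertex l e (l e)) else 0)) := by
  rw [my_mdeg_blowup_apply]
  refine Finset.sum_congr rfl fun e _ => ?_
  have c1 : ∀ k : Fin (l e), (G.pathVertex l e (k : ℕ) = Sum.inl v)
      ↔ (k = (⟨0, hl e⟩ : Fin (l e)) ∧ G.s e = v) := by
    intro k
    have hk := k.isLt
    rw [my_pv_eq_inl_iff G l e (hl e)]
    constructor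
    · rintro (⟨h1, h2⟩ | ⟨h1, -⟩)
      · exact ⟨by simp [Fin.ext_iff, h1], h2⟩
      · omega
    · rintro ⟨h1, h2⟩
      exact Or.inl ⟨by simpa [Fin.ext_iff] using h1, h2⟩
  have c2 : ∀ k : Fin (l e), (G.pathVertex l e ((k : ℕ) + 1) = Sum.inl v)
      ↔ (k = (⟨l e - 1, by have := hl e; omega⟩ : Fin (l e)) ∧ G.t e = v) := by
    intro k
    have hk := k.isLt
    rw [my_pv_eq_inl_iff G l e (hl e)]
    constructor
    · rintro (⟨h1, -⟩ | ⟨h1, h2⟩)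
      · omega
      · exact ⟨by simp [Fin.ext_iff]; omega, h2⟩
    · rintro ⟨h1, h2⟩
      refine Or.inr ⟨?_, h2⟩
      have : (k : ℕ) = l e - 1 := by simpa [Fin.ext_iff] using h1
      omega
  rw [Finset.sum_add_distrib]
  simp only [c1, c2, ite_and]
  rw [Finset.sum_ite_eq' Finset.univ, Finset.sum_ite_eq' Finset.univ]
  simp only [Finset.mem_univ, if_true]
  congr 2
  · have : ((⟨l e - 1, by have := hl e; omega⟩ : Fin (l e)) : ℕ) + 1 = l e := by
      have := hl e; simp; omega
    rw [this]
end Multigraph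

/-- The characteristic function `χ_v` of a vertex. -/
def chi {W : Type*} [DecidableEq W] (v : W) : W → ℤ := fun u => if u = v then 1 else 0

/-- Let `(G,l)` be a finite connected `ℕ`-labelled graph and `(G̃,l̃)`
its total blow-up graph.  The map induced by extension-by-zero between the cokernel of the
multidegree operator `δ` of `(G,l)` (on Cartier labellings) and the cokernel of the
Laplacian `δ̃` of `G̃` is injective: if the extension by zero of `α : ℤ^V` is in the image
of `δ̃`, then `α` is in the image of `δ`. -/
theorem statement10 {V E : Type*} [Fintype V] [Fintype E] [DecidableEq V] [DecidableEq E]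
    (G : Multigraph V E) (hG : G.Connected)
    (l : E → ℕ) (hl : ∀ e, 1 ≤ l e) (α : V → ℤ)
    (h : ∃ ψ : (V ⊕ Σ e : E, Fin (l e - 1)) → ℤ,
      (G.blowup l).mdeg (fun _ => 1) ψ = Sum.elim α (fun _ => 0)) :
    ∃ φ : V → ℤ, G.Cartier l φ ∧ G.mdeg l φ = α := by
  obtain ⟨ψ, hψ⟩ := h
  set d : E → ℤ := fun e => ψ (G.pathVertex l e 1) - ψ (G.pathVertex l e 0) with hd
  have step : ∀ e : E, ∀ j : ℕ, j < l e →
      ψ (G.pathVertex l e (j + 1)) - ψ (G.pathVertex l e j) = d e := by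
    intro e j
    induction j with
    | zero => intro _; rfl
    | succ j ih =>
      intro hj
      have h0 := congrFun hψ (Sum.inr ⟨e, ⟨j, by omega⟩⟩)
      rw [Multigraph.my_mdeg_blowup_inr] at h0
      simp only [Sum.elim_inr] at h0
      have hih := ih (by omega)
      show ψ (G.pathVertex l e (j + 2)) - ψ (G.pathVertex l e (j + 1)) = d e
      linarith
  have pv0 : ∀ e : E, G.pathVertex l e 0 = Sum.inl (G.s e) := fun e => rfl
  have pvl : ∀ e : E, G.pathVertex l e (l e) = Sum.inl (G.t e) := by
    intro e
    have := hl e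
    simp only [Multigraph.pathVertex]
    split_ifs <;> first | rfl | omega
  have tele : ∀ e : E, ∀ j : ℕ, j ≤ l e →
      ψ (G.pathVertex l e j) - ψ (G.pathVertex l e 0) = (j : ℤ) * d e := by
    intro e j
    induction j with
    | zero => intro _; simp
    | succ j ih =>
      intro hj
      have h1 := step e j (by omega)
      have h2 := ih (by omega)
      push_cast
      linarith
  set φ : V → ℤ := fun v => ψ (Sum.inl v) with hφ
  have key : ∀ e : E, φ (G.t e) - φ (G.s e) = (l e : ℤ) * d e := by
    intro e
    have := tele e (l e) le_rfl
    rw [pv0, pvl] at this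
    exact this
  refine ⟨φ, fun e => ⟨-(d e), by rw [← neg_sub (φ (G.t e)), key]; ring⟩, ?_⟩
  funext v
  have hα := congrFun hψ (Sum.inl v)
  rw [Multigraph.my_mdeg_blowup_inl G l hl] at hα
  simp only [Sum.elim_inl] at hα
  rw [← hα, Multigraph.mdeg]
  refine Finset.sum_congr rfl fun e _ => ?_
  have hle := hl e
  have hne : (l e : ℤ) ≠ 0 := by exact_mod_cast (by omega : l e ≠ 0)
  have hd1 : ψ (G.pathVertex l e 1) - ψ (G.pathVertex l e 0) = d e := step e 0 (by omega)
  have hd2 : ψ (G.pathVertex l e (l e - 1)) - ψ (G.pathVertex l e (l e)) = -(d e) := by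
    have := step e (l e - 1) (by omega)
    have heq : l e - 1 + 1 = l e := by omega
    rw [heq] at this
    linarith
  have hq1 : (φ (G.t e) - φ (G.s e)) / (l e : ℤ) = d e := by
    rw [key, Int.mul_ediv_cancel_left _ hne]
  have hq2 : (φ (G.s e) - φ (G.t e)) / (l e : ℤ) = -(d e) := by
    rw [← neg_sub (φ (G.t e)), key, ← mul_neg, Int.mul_ediv_cancel_left _ hne]
  rw [hd1, hd2, hq1, hq2]
end

section
/- Let (G,l) be a finite connected ℕ-labelled graph. The map ε̄ : coker(δ) → coker(δ̃) from the cokernel of the multidegree operator of (G,l) to the cokernel of the Laplacian of the total blow-up graph (G̃,l̃) is an isomorphism if and only if (G,l) is circuit-coprime. -/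
set_option linter.unusedSectionVars false

namespace Stmt11

open Multigraph

variable {V E : Type*} [Fintype V] [Fintype E] [DecidableEq V] [DecidableEq E]
  (G : Multigraph V E) (l : E → ℕ)

/-- abbreviation for the Laplacian of the blow-up -/
abbrev Lap (ψ : (V ⊕ Σ e : E, Fin (l e - 1)) → ℤ) :
    (V ⊕ Σ e : E, Fin (l e - 1)) → ℤ :=
  (G.blowup l).mdeg (fun _ => 1) ψ

lemma blowup_s (e : E) (i : Fin (l e)) :
    (G.blowup l).s ⟨e, i⟩ = G.pathVertex l e i.1 := by
  rcases i with ⟨i, hi⟩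
  simp only [Multigraph.blowup, Multigraph.pathVertex]
  split_ifs <;> simp_all

lemma blowup_t (e : E) (i : Fin (l e)) :
    (G.blowup l).t ⟨e, i⟩ = G.pathVertex l e (i.1 + 1) := by
  rcases i with ⟨i, hi⟩
  simp only [Multigraph.blowup, Multigraph.pathVertex]
  split_ifs with h1 h2 h3 <;> simp_all <;> omega

lemma path_zero (e : E) : G.pathVertex l e 0 = Sum.inl (G.s e) := by
  simp [Multigraph.pathVertex]

lemma path_last (e : E) (hl : 1 ≤ l e) : G.pathVertex l e (l e) = Sum.inl (G.t e) := by
  simp only [Multigraph.pathVertex]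
  split_ifs <;> first | rfl | omega

lemma path_ne_inr (e e' : E) (h : e ≠ e') (j : ℕ) (k : Fin (l e' - 1)) :
    G.pathVertex l e j ≠ Sum.inr ⟨e', k⟩ := by
  simp only [Multigraph.pathVertex]
  split_ifs <;> simp [h]

lemma path_eq_inr_iff (e : E) (j : ℕ) (hj : j ≤ l e) (k : Fin (l e - 1)) :
    (G.pathVertex l e j = Sum.inr ⟨e, k⟩) ↔ j = k.1 + 1 := by
  have hk := k.isLt
  simp only [Multigraph.pathVertex]
  split_ifs with h0 h1
  · simp only [reduceCtorEq, false_iff]; omega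
  · simp only [Sum.inr.injEq, Sigma.ext_iff, heq_eq_eq, true_and, Fin.ext_iff]
    omega
  · simp only [reduceCtorEq, false_iff]; omega

lemma path_eq_inl_iff_left (e : E) (j : ℕ) (hj : j < l e) (v : V) :
    (G.pathVertex l e j = Sum.inl v) ↔ (j = 0 ∧ G.s e = v) := by
  simp only [Multigraph.pathVertex]
  split_ifs with h0 h1 <;>
    first
      | (simp only [reduceCtorEq, false_iff]; tauto)
      | simp [h0]
      | omega

lemma path_eq_inl_iff_right (e : E) (j : ℕ) (hj1 : 1 ≤ j) (hj : j ≤ l e) (v : V) :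
    (G.pathVertex l e j = Sum.inl v) ↔ (j = l e ∧ G.t e = v) := by
  simp only [Multigraph.pathVertex]
  split_ifs with h0 h1
  · omega
  · simp only [reduceCtorEq, false_iff]; omega
  · have hje : j = l e := by omega
    simp [hje]

lemma lap_eval (ψ : (V ⊕ Σ e : E, Fin (l e - 1)) → ℤ) (w : V ⊕ Σ e : E, Fin (l e - 1)) :
    Lap G l ψ w = ∑ e : E, ∑ i : Fin (l e),
      ((if G.pathVertex l e i.1 = w then
          ψ (G.pathVertex l e (i.1 + 1)) - ψ (G.pathVertex l e i.1) else 0) +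
       (if G.pathVertex l e (i.1 + 1) = w then
          ψ (G.pathVertex l e i.1) - ψ (G.pathVertex l e (i.1 + 1)) else 0)) := by
  show (G.blowup l).mdeg (fun _ => 1) ψ w = _
  unfold Multigraph.mdeg
  rw [← Finset.univ_sigma_univ, Finset.sum_sigma]
  refine Finset.sum_congr rfl fun e _ => Finset.sum_congr rfl fun i _ => ?_
  rw [blowup_s, blowup_t]
  norm_num

end Stmt11
namespace Stmt11

variable {V E : Type*} [Fintype V] [Fintype E] [DecidableEq V] [DecidableEq E]
  (G : Multigraph V E) (l : E → ℕ)

lemma lap_interior (ψ : (V ⊕ Σ e : E, Fin (l e - 1)) → ℤ) (e : E) (k : Fin (l e - 1)) :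
    Lap G l ψ (Sum.inr ⟨e, k⟩) =
      ψ (G.pathVertex l e k.1) - 2 * ψ (G.pathVertex l e (k.1 + 1))
        + ψ (G.pathVertex l e (k.1 + 2)) := by
  have hk := k.isLt
  rw [lap_eval]
  rw [Finset.sum_eq_single e]
  · have h1 : ∀ i : Fin (l e),
        ((if G.pathVertex l e i.1 = Sum.inr ⟨e, k⟩ then
          ψ (G.pathVertex l e (i.1 + 1)) - ψ (G.pathVertex l e i.1) else 0) +
         (if G.pathVertex l e (i.1 + 1) = Sum.inr ⟨e, k⟩ then
          ψ (G.pathVertex l e i.1) - ψ (G.pathVertex l e (i.1 + 1)) else 0)) =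
        ((if i = (⟨k.1 + 1, by omega⟩ : Fin (l e)) then
          ψ (G.pathVertex l e (k.1 + 2)) - ψ (G.pathVertex l e (k.1 + 1)) else 0) +
         (if i = (⟨k.1, by omega⟩ : Fin (l e)) then
          ψ (G.pathVertex l e k.1) - ψ (G.pathVertex l e (k.1 + 1)) else 0)) := by
      intro i
      have hi := i.isLt
      simp only [path_eq_inr_iff G l e i.1 (by omega) k,
        path_eq_inr_iff G l e (i.1+1) (by omega) k]
      congr 1
      · by_cases h : i.1 = k.1 + 1
        · rw [if_pos h, if_pos (by exact Fin.ext h)]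
          rw [show i.1 + 1 = k.1 + 2 by omega, h]
        · rw [if_neg h, if_neg (by simpa [Fin.ext_iff] using h)]
      · by_cases h : i.1 + 1 = k.1 + 1
        · rw [if_pos h, if_pos (by exact Fin.ext (show i.1 = k.1 by omega))]
          rw [show i.1 = k.1 by omega]
        · rw [if_neg h, if_neg (fun hc => h (by
            have : i.1 = k.1 := congrArg Fin.val hc
            omega))]
    rw [Finset.sum_congr rfl (fun i _ => h1 i), Finset.sum_add_distrib,
      Finset.sum_ite_eq' Finset.univ, Finset.sum_ite_eq' Finset.univ]
    simp only [Finset.mem_univ, if_true]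
    ring
  · intro e' _ he'
    apply Finset.sum_eq_zero
    intro i _
    rw [if_neg (path_ne_inr G l e' e he' _ k), if_neg (path_ne_inr G l e' e he' _ k)]
    simp
  · intro h; exact absurd (Finset.mem_univ e) h

lemma lap_boundary (ψ : (V ⊕ Σ e : E, Fin (l e - 1)) → ℤ) (hl : ∀ e, 1 ≤ l e) (v : V) :
    Lap G l ψ (Sum.inl v) = ∑ e : E,
      ((if G.s e = v then ψ (G.pathVertex l e 1) - ψ (G.pathVertex l e 0) else 0) +
       (if G.t e = v then ψ (G.pathVertex l e (l e - 1)) - ψ (G.pathVertex l e (l e)) else 0)) := by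
  rw [lap_eval]
  refine Finset.sum_congr rfl fun e _ => ?_
  have hle := hl e
  have h1 : ∀ i : Fin (l e),
      ((if G.pathVertex l e i.1 = Sum.inl v then
          ψ (G.pathVertex l e (i.1 + 1)) - ψ (G.pathVertex l e i.1) else 0) +
       (if G.pathVertex l e (i.1 + 1) = Sum.inl v then
          ψ (G.pathVertex l e i.1) - ψ (G.pathVertex l e (i.1 + 1)) else 0)) =
      ((if i = (⟨0, by omega⟩ : Fin (l e)) then
          (if G.s e = v then ψ (G.pathVertex l e 1) - ψ (G.pathVertex l e 0) else 0) else 0) +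
       (if i = (⟨l e - 1, by omega⟩ : Fin (l e)) then
          (if G.t e = v then ψ (G.pathVertex l e (l e - 1)) - ψ (G.pathVertex l e (l e)) else 0)
        else 0)) := by
    intro i
    have hi := i.isLt
    simp only [path_eq_inl_iff_left G l e i.1 (by omega) v,
      path_eq_inl_iff_right G l e (i.1 + 1) (by omega) (by omega) v]
    congr 1
    · by_cases h : i.1 = 0
      · rw [if_pos (Fin.ext h)]
        by_cases hs : G.s e = v
        · rw [if_pos ⟨h, hs⟩, if_pos hs, h]
        · rw [if_neg (by tauto), if_neg hs]
      · rw [if_neg (fun hc => h (congrArg Fin.val hc)), if_neg (by tauto)]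
    · by_cases h : i.1 + 1 = l e
      · rw [if_pos (Fin.ext (show i.1 = l e - 1 by omega))]
        by_cases ht : G.t e = v
        · rw [if_pos ⟨h, ht⟩, if_pos ht]
          rw [show i.1 = l e - 1 by omega, show (l e - 1) + 1 = l e by omega]
        · rw [if_neg (by tauto), if_neg ht]
      · rw [if_neg (show ¬(i.1 + 1 = l e ∧ G.t e = v) by tauto), if_neg (fun hc => h (by
          have : i.1 = l e - 1 := congrArg Fin.val hc
          omega))]
  rw [Finset.sum_congr rfl (fun i _ => h1 i), Finset.sum_add_distrib,
    Finset.sum_ite_eq' Finset.univ, Finset.sum_ite_eq' Finset.univ]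
  simp only [Finset.mem_univ, if_true]

lemma sum_identity (a : ℕ → ℤ) (m : ℕ) :
    ∑ j ∈ Finset.range m, ((j : ℤ) + 1) * (a j - 2 * a (j + 1) + a (j + 2)) =
      a 0 + m * a (m + 1) - (m + 1) * a m := by
  induction m with
  | zero => simp
  | succ n ih =>
    rw [Finset.sum_range_succ, ih]
    push_cast
    ring

/-- the functional `f_e` -/
def fE (e : E) (β : (V ⊕ Σ e : E, Fin (l e - 1)) → ℤ) : ℤ :=
  ∑ k : Fin (l e - 1), ((k.1 : ℤ) + 1) * β (Sum.inr ⟨e, k⟩)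

lemma fE_lap (ψ : (V ⊕ Σ e : E, Fin (l e - 1)) → ℤ) (e : E) (hle : 1 ≤ l e) :
    fE l e (Lap G l ψ) =
      ψ (G.pathVertex l e 0) + ((l e : ℤ) - 1) * ψ (G.pathVertex l e (l e))
        - (l e : ℤ) * ψ (G.pathVertex l e (l e - 1)) := by
  unfold fE
  have h1 : ∀ k : Fin (l e - 1), ((k.1 : ℤ) + 1) * Lap G l ψ (Sum.inr ⟨e, k⟩) =
      ((k.1 : ℤ) + 1) * (ψ (G.pathVertex l e k.1) - 2 * ψ (G.pathVertex l e (k.1 + 1))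
        + ψ (G.pathVertex l e (k.1 + 2))) := by
    intro k; rw [lap_interior]
  rw [Finset.sum_congr rfl (fun k _ => h1 k)]
  rw [Fin.sum_univ_eq_sum_range
    (fun j => ((j : ℤ) + 1) * (ψ (G.pathVertex l e j) - 2 * ψ (G.pathVertex l e (j + 1))
      + ψ (G.pathVertex l e (j + 2)))) (l e - 1)]
  rw [sum_identity (fun j => ψ (G.pathVertex l e j)) (l e - 1)]
  rw [show (l e - 1) + 1 = l e by omega]
  have : ((l e - 1 : ℕ) : ℤ) = (l e : ℤ) - 1 := by omega
  rw [this]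
  ring

lemma fE_lap_dvd (ψ : (V ⊕ Σ e : E, Fin (l e - 1)) → ℤ) (e : E) (hle : 1 ≤ l e) :
    (l e : ℤ) ∣ fE l e (Lap G l ψ) - (ψ (Sum.inl (G.s e)) - ψ (Sum.inl (G.t e))) := by
  rw [fE_lap G l ψ e hle, path_zero, path_last G l e hle]
  refine ⟨ψ (Sum.inl (G.t e)) - ψ (G.pathVertex l e (l e - 1)), by ring⟩

lemma fE_elim (α : V → ℤ) (e : E) : fE l e (Sum.elim α (fun _ => 0)) = 0 := by
  unfold fE; simp

lemma fE_add (β γ : (V ⊕ Σ e : E, Fin (l e - 1)) → ℤ) (e : E) :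
    fE l e (β + γ) = fE l e β + fE l e γ := by
  unfold fE
  rw [← Finset.sum_add_distrib]
  refine Finset.sum_congr rfl fun k _ => ?_
  simp [Pi.add_apply]; ring

end Stmt11
namespace Stmt11

variable {V E : Type*} [Fintype V] [Fintype E] [DecidableEq V] [DecidableEq E]
  (G : Multigraph V E) (l : E → ℕ)

lemma cyc_inj (m : ℕ) : Function.Injective (Multigraph.cyc : Fin m → Fin m) := by
  intro i j hij
  have h1 : (i.1 + 1) % m = (j.1 + 1) % m := congrArg Fin.val hij
  have hi := i.isLt; have hj := j.isLt
  apply Fin.ext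
  rcases Nat.lt_or_ge (i.1 + 1) m with h | h <;> rcases Nat.lt_or_ge (j.1 + 1) m with h' | h'
  · rw [Nat.mod_eq_of_lt h, Nat.mod_eq_of_lt h'] at h1; omega
  · rw [Nat.mod_eq_of_lt h, show j.1 + 1 = m by omega, Nat.mod_self] at h1; omega
  · rw [Nat.mod_eq_of_lt h', show i.1 + 1 = m by omega, Nat.mod_self] at h1; omega
  · omega

lemma cyc_sum (m : ℕ) (g : Fin m → ℤ) : ∑ i : Fin m, g (Multigraph.cyc i) = ∑ i, g i :=
  Fintype.sum_bijective Multigraph.cyc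
    ((Finite.injective_iff_bijective).mp (cyc_inj m)) _ _ (fun _ => rfl)

lemma forward_dir (hl : ∀ e, 1 ≤ l e)
    (h1 : ∀ β : (V ⊕ Σ e : E, Fin (l e - 1)) → ℤ,
      ∃ (α : V → ℤ) (ψ : (V ⊕ Σ e : E, Fin (l e - 1)) → ℤ),
        β = Sum.elim α (fun _ => 0) + (G.blowup l).mdeg (fun _ => 1) ψ) :
    G.CircuitCoprime l := by
  intro m v ed hc
  obtain ⟨hm, hv, hed, hcon⟩ := hc
  by_contra hg
  obtain ⟨p, hp, hpg⟩ := Nat.exists_prime_and_dvd hg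
  have hpl : ∀ i, p ∣ l (ed i) := fun i => hpg.trans (Finset.gcd_dvd (Finset.mem_univ i))
  have hp2 := hp.two_le
  set i0 : Fin m := ⟨0, hm⟩ with hi0
  have hle0 : 2 ≤ l (ed i0) := by
    have h2 := Nat.le_of_dvd (by have := hl (ed i0); omega) (hpl i0)
    omega
  set w0 : Fin (l (ed i0) - 1) := ⟨0, by omega⟩ with hw0
  set β : (V ⊕ Σ e : E, Fin (l e - 1)) → ℤ :=
    fun u => if u = Sum.inr ⟨ed i0, w0⟩ then 1 else 0 with hβdef
  obtain ⟨α, ψ, hB⟩ := h1 β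
  set σ : Fin m → ℤ := fun i => if G.s (ed i) = v i then 1 else -1 with hσ
  have hkey : ∀ i, σ i * (ψ (Sum.inl (G.s (ed i))) - ψ (Sum.inl (G.t (ed i)))) =
      ψ (Sum.inl (v i)) - ψ (Sum.inl (v (Multigraph.cyc i))) := by
    intro i
    rcases hcon i with ⟨hs, ht⟩ | ⟨hs, ht⟩
    · simp only [hσ]
      rw [if_pos hs, hs, ht]; ring
    · by_cases hsv : G.s (ed i) = v i
      · have hvv : v (Multigraph.cyc i) = v i := by rw [← hs, hsv]
        simp only [hσ]
        rw [if_pos hsv, hs, ht, hvv]; ring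
      · simp only [hσ]
        rw [if_neg hsv, hs, ht]; ring
  -- fE applied to β
  have hfEβ : ∀ i, fE l (ed i) β = if i = i0 then 1 else 0 := by
    intro i
    by_cases hii : i = i0
    · rw [if_pos hii, hii]
      unfold fE
      have : ∀ k : Fin (l (ed i0) - 1),
          ((k.1 : ℤ) + 1) * β (Sum.inr ⟨ed i0, k⟩) = if k = w0 then ((k.1 : ℤ) + 1) else 0 := by
        intro k
        simp only [hβdef]
        by_cases hk : k = w0
        · rw [if_pos hk, if_pos (by rw [hk]), mul_one]
        · rw [if_neg (by simp [hk]), if_neg hk, mul_zero]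
      rw [Finset.sum_congr rfl (fun k _ => this k), Finset.sum_ite_eq' Finset.univ]
      simp [hw0]
    · rw [if_neg hii]
      apply Finset.sum_eq_zero
      intro k _
      have hne : ed i ≠ ed i0 := fun hc => hii (hed hc)
      simp only [hβdef]
      rw [if_neg (by simp [hne]), mul_zero]
  have hfEeq : ∀ e, fE l e ((G.blowup l).mdeg (fun _ => 1) ψ) = fE l e β := by
    intro e
    rw [hB, fE_add, fE_elim]; ring
  -- the telescoping sum
  have htel : ∑ i : Fin m, σ i * (ψ (Sum.inl (G.s (ed i))) - ψ (Sum.inl (G.t (ed i)))) = 0 := by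
    rw [Finset.sum_congr rfl (fun i _ => hkey i), Finset.sum_sub_distrib]
    rw [cyc_sum m (fun i => ψ (Sum.inl (v i)))]
    ring
  -- divisibility of the total sum
  have hdvd : (p : ℤ) ∣ ∑ i : Fin m, σ i * fE l (ed i) (Lap G l ψ) := by
    have : ∀ i : Fin m, σ i * fE l (ed i) (Lap G l ψ) =
        σ i * (fE l (ed i) (Lap G l ψ) - (ψ (Sum.inl (G.s (ed i))) - ψ (Sum.inl (G.t (ed i)))))
          + σ i * (ψ (Sum.inl (G.s (ed i))) - ψ (Sum.inl (G.t (ed i)))) := by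
      intro i; ring
    rw [Finset.sum_congr rfl (fun i _ => this i), Finset.sum_add_distrib, htel, add_zero]
    apply Finset.dvd_sum
    intro i _
    exact Dvd.dvd.mul_left
      ((Int.natCast_dvd_natCast.mpr (hpl i)).trans (fE_lap_dvd G l ψ (ed i) (hl _))) _
  -- but the sum is ±1
  have hsum : ∑ i : Fin m, σ i * fE l (ed i) (Lap G l ψ) = σ i0 := by
    have : ∀ i : Fin m, σ i * fE l (ed i) (Lap G l ψ) = if i = i0 then σ i0 else 0 := by
      intro i
      rw [show Lap G l ψ = (G.blowup l).mdeg (fun _ => 1) ψ from rfl, hfEeq, hfEβ]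
      by_cases hii : i = i0
      · rw [if_pos hii, if_pos hii, hii, mul_one]
      · rw [if_neg hii, if_neg hii, mul_zero]
    rw [Finset.sum_congr rfl (fun i _ => this i), Finset.sum_ite_eq' Finset.univ]
    simp
  rw [hsum] at hdvd
  have habs : (p : ℤ) ∣ 1 := by
    simp only [hσ] at hdvd
    rcases ite_eq_or_eq (G.s (ed i0) = v i0) (1 : ℤ) (-1) with h | h <;> rw [h] at hdvd
    · exact hdvd
    · exact (Int.dvd_neg).mp hdvd
  have : (p : ℤ) ≤ 1 := Int.le_of_dvd one_pos habs
  have : (2 : ℤ) ≤ (p : ℤ) := by exact_mod_cast hp2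
  omega

end Stmt11
namespace Stmt11

variable {V E : Type*} [Fintype V] [Fintype E] [DecidableEq V] [DecidableEq E]
  (G : Multigraph V E) (l : E → ℕ)

lemma partB (hl : ∀ e, 1 ≤ l e) (α : V → ℤ) (ψ : (V ⊕ Σ e : E, Fin (l e - 1)) → ℤ)
    (hψ : (G.blowup l).mdeg (fun _ => 1) ψ = Sum.elim α (fun _ => 0)) :
    ∃ φ : V → ℤ, G.Cartier l φ ∧ G.mdeg l φ = α := by
  set φ : V → ℤ := fun v => ψ (Sum.inl v) with hφ
  have hψ' : Lap G l ψ = Sum.elim α (fun _ => 0) := hψ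
  have per_edge : ∀ e : E,
      ((l e : ℤ) ∣ φ (G.s e) - φ (G.t e)) ∧
      (ψ (G.pathVertex l e 1) - ψ (G.pathVertex l e 0) =
        (φ (G.t e) - φ (G.s e)) / (l e : ℤ)) ∧
      (ψ (G.pathVertex l e (l e - 1)) - ψ (G.pathVertex l e (l e)) =
        (φ (G.s e) - φ (G.t e)) / (l e : ℤ)) := by
    intro e
    have hle := hl e
    set n := l e with hn
    set a : ℕ → ℤ := fun j => ψ (G.pathVertex l e j) with ha
    have hzero : ∀ k : Fin (n - 1), a k.1 - 2 * a (k.1 + 1) + a (k.1 + 2) = 0 := by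
      intro k
      have h2 : Lap G l ψ (Sum.inr ⟨e, k⟩) = 0 := by rw [hψ']; rfl
      rw [lap_interior] at h2
      exact h2
    have hdiff : ∀ j, j ≤ n - 1 → a (j + 1) - a j = a 1 - a 0 := by
      intro j
      induction j with
      | zero => intro _; rfl
      | succ j ih =>
        intro hj
        have hk : j < n - 1 := by omega
        have h0 := hzero ⟨j, hk⟩
        have h1 := ih (by omega)
        simp only at h0
        linarith
    have htel : ∀ j, j ≤ n → a j - a 0 = j * (a 1 - a 0) := by
      intro j
      induction j with
      | zero => intro _; simp
      | succ j ih =>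
        intro hj
        have h1 := ih (by omega)
        have h2 := hdiff j (by omega)
        push_cast
        linarith
    have hS : φ (G.s e) = a 0 := by rw [ha]; simp only [path_zero]; rfl
    have hT : φ (G.t e) = a n := by rw [ha]; simp only [hφ, hn, path_last G l e hle]
    have hmain : a n - a 0 = n * (a 1 - a 0) := htel n le_rfl
    have hlast : a n - a (n - 1) = a 1 - a 0 := by
      have := hdiff (n - 1) le_rfl
      rwa [show n - 1 + 1 = n by omega] at this
    have hne : (n : ℤ) ≠ 0 := by
      have : 0 < n := by omega
      exact_mod_cast Nat.pos_iff_ne_zero.mp this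
    refine ⟨⟨-(a 1 - a 0), by rw [hS, hT]; linarith⟩, ?_, ?_⟩
    · rw [hS, hT, show a n - a 0 = (n : ℤ) * (a 1 - a 0) from hmain,
        Int.mul_ediv_cancel_left _ hne]
    · rw [hS, hT, show a 0 - a n = (n : ℤ) * (-(a 1 - a 0)) by linarith,
        Int.mul_ediv_cancel_left _ hne]
      linarith
  refine ⟨φ, fun e => (per_edge e).1, ?_⟩
  funext u
  have hb : Lap G l ψ (Sum.inl u) = α u := by rw [hψ']; rfl
  rw [lap_boundary G l ψ hl u] at hb
  rw [← hb]
  unfold Multigraph.mdeg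
  refine Finset.sum_congr rfl fun e _ => ?_
  congr 1
  · by_cases hs : G.s e = u
    · rw [if_pos hs, if_pos hs, (per_edge e).2.1]
    · rw [if_neg hs, if_neg hs]
  · by_cases ht : G.t e = u
    · rw [if_pos ht, if_pos ht, (per_edge e).2.2]
    · rw [if_neg ht, if_neg ht]

end Stmt11
namespace Stmt11

variable {V E : Type*} [Fintype V] [Fintype E] [DecidableEq V] [DecidableEq E]
  (G : Multigraph V E) (l : E → ℕ)

/-- a walk of length `k` inside the edge set `S` -/
def IsWalkIn (S : Set E) (k : ℕ) (w : ℕ → V) (f : ℕ → E) : Prop :=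
  ∀ i < k, f i ∈ S ∧ G.Connects (f i) (w i) (w (i + 1))

/-- reachability through edges of `S` -/
def ReachIn (S : Set E) (a b : V) : Prop :=
  ∃ (k : ℕ) (w : ℕ → V) (f : ℕ → E), w 0 = a ∧ w k = b ∧ IsWalkIn G S k w f

lemma reachIn_refl (S : Set E) (a : V) (e : E) : ReachIn G S a a :=
  ⟨0, fun _ => a, fun _ => e, rfl, rfl, fun i hi => absurd hi (by omega)⟩

lemma reachIn_step (S : Set E) {a b c : V} (h : ReachIn G S a b) (e : E) (he : e ∈ S)
    (hc : G.Connects e b c) : ReachIn G S a c := by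
  obtain ⟨k, w, f, h0, hk, hw⟩ := h
  refine ⟨k + 1, fun t => if t ≤ k then w t else c, fun t => if t < k then f t else e,
    ?_, ?_, ?_⟩
  · dsimp only; rw [if_pos (Nat.zero_le k)]; exact h0
  · dsimp only; rw [if_neg (by omega)]
  · intro i hi
    dsimp only
    by_cases hik : i < k
    · rw [if_pos hik, if_pos (by omega), if_pos (by omega)]
      exact hw i hik
    · have hik' : i = k := by omega
      rw [if_neg hik, hik', if_pos le_rfl, if_neg (by omega), hk]
      exact ⟨he, hc⟩

lemma circuit_of_reach (e0 : E) (S : Set E) (hS0 : e0 ∉ S)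
    (h : ReachIn G S (G.s e0) (G.t e0)) :
    ∃ (m : ℕ) (v : Fin m → V) (ed : Fin m → E),
      G.IsCircuit v ed ∧ ∀ i, ed i = e0 ∨ ed i ∈ S := by
  classical
  have hex : ∃ k, ∃ w f, w 0 = G.s e0 ∧ w k = G.t e0 ∧ IsWalkIn G S k w f := h
  obtain ⟨w, f, h0, hk, hw⟩ := Nat.find_spec hex
  set k := Nat.find hex with hkdef
  -- minimal walks have pairwise distinct vertices
  have key : ∀ i j, i < j → j ≤ k → w i ≠ w j := by
    intro i j hij hj heq
    have hshort : ∃ w' f', w' 0 = G.s e0 ∧ w' (k - (j - i)) = G.t e0 ∧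
        IsWalkIn G S (k - (j - i)) w' f' := by
      refine ⟨fun t => if t ≤ i then w t else w (t + (j - i)),
        fun t => if t < i then f t else f (t + (j - i)), ?_, ?_, ?_⟩
      · dsimp only; rw [if_pos (Nat.zero_le i)]; exact h0
      · dsimp only
        by_cases hik : k - (j - i) ≤ i
        · have hkj : k = j := by omega
          have hti : k - (j - i) = i := by omega
          rw [if_pos hik, hti, heq, ← hkj] at *
          exact hk
        · rw [if_neg hik, show k - (j - i) + (j - i) = k by omega]
          exact hk
      · intro t ht
        dsimp only
        by_cases htt : t < i
        · rw [if_pos htt, if_pos (by omega), if_pos (by omega)]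
          exact hw t (by omega)
        · rw [if_neg htt]
          have hwt : (if t ≤ i then w t else w (t + (j - i))) = w (t + (j - i)) := by
            by_cases h1 : t ≤ i
            · have : t = i := by omega
              rw [if_pos h1, this, heq, show i + (j - i) = j by omega]
            · rw [if_neg h1]
          rw [hwt, if_neg (by omega), show t + 1 + (j - i) = (t + (j - i)) + 1 by omega]
          exact hw (t + (j - i)) (by omega)
    exact Nat.find_min hex (by omega) hshort
  have hinj : ∀ i j, i ≤ k → j ≤ k → w i = w j → i = j := by
    intro i j hi hj hij
    rcases Nat.lt_trichotomy i j with h | h | h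
    · exact absurd hij (key i j h hj)
    · exact h
    · exact absurd hij.symm (key j i h hi)
  refine ⟨k + 1, fun i => w i.1, fun i => if i.1 < k then f i.1 else e0, ⟨Nat.succ_pos k, ?_, ?_, ?_⟩, ?_⟩
  · intro i j hij
    dsimp only at hij
    exact Fin.ext (hinj i.1 j.1 (by omega) (by omega) hij)
  · intro i j hij
    dsimp only at hij
    by_cases hik : i.1 < k <;> by_cases hjk : j.1 < k
    · rw [if_pos hik, if_pos hjk] at hij
      have hci := (hw i.1 hik).2
      have hcj := (hw j.1 hjk).2
      rw [hij] at hci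
      apply Fin.ext
      rcases hci with ⟨hs1, ht1⟩ | ⟨hs1, ht1⟩ <;> rcases hcj with ⟨hs2, ht2⟩ | ⟨hs2, ht2⟩
      · exact hinj i.1 j.1 (by omega) (by omega) (hs1.symm.trans hs2)
      · have e1 : i.1 = j.1 + 1 := hinj _ _ (by omega) (by omega) (hs1.symm.trans hs2)
        have e2 : i.1 + 1 = j.1 := hinj _ _ (by omega) (by omega) (ht1.symm.trans ht2)
        omega
      · have e1 : i.1 + 1 = j.1 := hinj _ _ (by omega) (by omega) (hs1.symm.trans hs2)
        have e2 : i.1 = j.1 + 1 := hinj _ _ (by omega) (by omega) (ht1.symm.trans ht2)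
        omega
      · have e1 : i.1 + 1 = j.1 + 1 := hinj _ _ (by omega) (by omega) (hs1.symm.trans hs2)
        omega
    · rw [if_pos hik, if_neg hjk] at hij
      exact absurd (hij ▸ (hw i.1 hik).1) hS0
    · rw [if_neg hik, if_pos hjk] at hij
      exact absurd (hij ▸ (hw j.1 hjk).1) hS0
    · apply Fin.ext; omega
  · intro i
    dsimp only
    by_cases hik : i.1 < k
    · have hcyc : (Multigraph.cyc i).1 = i.1 + 1 := Nat.mod_eq_of_lt (by omega)
      rw [if_pos hik]
      have := (hw i.1 hik).2
      rw [show (Multigraph.cyc i).1 = i.1 + 1 from hcyc]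
      exact this
    · have hik' : i.1 = k := by omega
      have hcyc : (Multigraph.cyc i).1 = 0 := by
        show (i.1 + 1) % (k + 1) = 0
        rw [hik', Nat.mod_self]
      rw [if_neg hik, hcyc, hik']
      exact Or.inr ⟨h0.symm, hk.symm⟩
  · intro i
    dsimp only
    by_cases hik : i.1 < k
    · rw [if_pos hik]; exact Or.inr (hw i.1 hik).1
    · rw [if_neg hik]; exact Or.inl rfl

lemma key_lemma (hcc : G.CircuitCoprime l) (hl : ∀ e, 1 ≤ l e) (e0 : E) (p : ℕ)
    (hp : p.Prime) (hpe : p ∣ l e0) :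
    ∃ c : ℤ, ¬ (p : ℤ) ∣ c ∧ ∃ φ : V → ℤ,
      (∀ e, e ≠ e0 → (l e : ℤ) ∣ (φ (G.s e) - φ (G.t e))) ∧
      φ (G.s e0) - φ (G.t e0) = c := by
  classical
  set S : Set E := {e | e ≠ e0 ∧ p ∣ l e} with hSdef
  have hS0 : e0 ∉ S := fun h => h.1 rfl
  have hnr : ¬ ReachIn G S (G.s e0) (G.t e0) := by
    intro h
    obtain ⟨m, v, ed, hcirc, hmem⟩ := circuit_of_reach G e0 S hS0 h
    have hgcd := hcc m v ed hcirc
    have hdvd : p ∣ Finset.univ.gcd (fun i => l (ed i)) := by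
      apply Finset.dvd_gcd
      intro i _
      rcases hmem i with h1 | h1
      · rw [h1]; exact hpe
      · exact h1.2
    rw [hgcd] at hdvd
    have := Nat.le_of_dvd one_pos hdvd
    have := hp.two_le
    omega
  set U : Set V := {u | ReachIn G S (G.s e0) u} with hUdef
  have hsU : G.s e0 ∈ U := reachIn_refl G S (G.s e0) e0
  have htU : G.t e0 ∉ U := hnr
  have hstep : ∀ e ∈ S, (G.s e ∈ U ↔ G.t e ∈ U) := by
    intro e he
    constructor
    · intro h; exact reachIn_step G S h e he (Or.inl ⟨rfl, rfl⟩)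
    · intro h; exact reachIn_step G S h e he (Or.inr ⟨rfl, rfl⟩)
  set F : Finset E := Finset.univ.filter (fun e => e ≠ e0 ∧ ¬ ((G.s e ∈ U) ↔ (G.t e ∈ U)))
    with hFdef
  set c : ℤ := ∏ e ∈ F, (l e : ℤ) with hcdef
  have hpc : ¬ (p : ℤ) ∣ c := by
    intro hdvd
    have hpint : Prime (p : ℤ) := Nat.prime_iff_prime_int.mp hp
    obtain ⟨e, heF, hpe'⟩ := (hpint.dvd_finset_prod_iff _).mp hdvd
    rw [hFdef, Finset.mem_filter] at heF
    have hpl : p ∣ l e := by exact_mod_cast hpe'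
    exact heF.2.2 (hstep e ⟨heF.2.1, hpl⟩)
  refine ⟨c, hpc, fun u => if u ∈ U then c else 0, ?_, ?_⟩
  · intro e hee0
    dsimp only
    by_cases hcr : (G.s e ∈ U) ↔ (G.t e ∈ U)
    · by_cases hsu : G.s e ∈ U
      · rw [if_pos hsu, if_pos (hcr.mp hsu), sub_self]; exact dvd_zero _
      · rw [if_neg hsu, if_neg (fun h => hsu (hcr.mpr h)), sub_self]; exact dvd_zero _
    · have heF : e ∈ F := by rw [hFdef, Finset.mem_filter]; exact ⟨Finset.mem_univ e, hee0, hcr⟩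
      have hdc : (l e : ℤ) ∣ c := Finset.dvd_prod_of_mem _ heF
      by_cases hsu : G.s e ∈ U
      · rw [if_pos hsu, if_neg (fun h => hcr ⟨fun _ => h, fun _ => hsu⟩), sub_zero]
        exact hdc
      · rw [if_neg hsu, if_pos (by tauto), zero_sub]
        exact dvd_neg.mpr hdc
  · dsimp only; rw [if_pos hsU, if_neg htU, sub_zero]

lemma exists_unit (hcc : G.CircuitCoprime l) (hl : ∀ e, 1 ≤ l e) (e0 : E) :
    ∃ φ : V → ℤ, (∀ e, e ≠ e0 → (l e : ℤ) ∣ (φ (G.s e) - φ (G.t e))) ∧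
      (l e0 : ℤ) ∣ (φ (G.s e0) - φ (G.t e0) - 1) := by
  set T : AddSubgroup ℤ :=
    { carrier := {t : ℤ | ∃ φ : V → ℤ,
        (∀ e, e ≠ e0 → (l e : ℤ) ∣ (φ (G.s e) - φ (G.t e))) ∧
        (l e0 : ℤ) ∣ (φ (G.s e0) - φ (G.t e0) - t)}
      zero_mem' := ⟨0, fun e _ => by simp, by simp⟩
      add_mem' := by
        rintro x y ⟨φ1, h1, h1'⟩ ⟨φ2, h2, h2'⟩
        refine ⟨φ1 + φ2, fun e he => ?_, ?_⟩
        · have := dvd_add (h1 e he) (h2 e he)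
          have heq : (φ1 + φ2) (G.s e) - (φ1 + φ2) (G.t e) =
              (φ1 (G.s e) - φ1 (G.t e)) + (φ2 (G.s e) - φ2 (G.t e)) := by
            simp [Pi.add_apply]; ring
          rw [heq]; exact this
        · have := dvd_add h1' h2'
          have heq : (φ1 + φ2) (G.s e0) - (φ1 + φ2) (G.t e0) - (x + y) =
              (φ1 (G.s e0) - φ1 (G.t e0) - x) + (φ2 (G.s e0) - φ2 (G.t e0) - y) := by
            simp [Pi.add_apply]; ring
          rw [heq]; exact this
      neg_mem' := by
        rintro x ⟨φ1, h1, h1'⟩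
        refine ⟨-φ1, fun e he => ?_, ?_⟩
        · have := (h1 e he).neg_right
          have heq : (-φ1) (G.s e) - (-φ1) (G.t e) = -(φ1 (G.s e) - φ1 (G.t e)) := by
            simp [Pi.neg_apply]; ring
          rw [heq]; exact this
        · have := h1'.neg_right
          have heq : (-φ1) (G.s e0) - (-φ1) (G.t e0) - (-x) =
              -(φ1 (G.s e0) - φ1 (G.t e0) - x) := by
            simp [Pi.neg_apply]; ring
          rw [heq]; exact this } with hTdef
  have hmemT : ∀ t : ℤ, t ∈ T ↔ ∃ φ : V → ℤ,
      (∀ e, e ≠ e0 → (l e : ℤ) ∣ (φ (G.s e) - φ (G.t e))) ∧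
      (l e0 : ℤ) ∣ (φ (G.s e0) - φ (G.t e0) - t) := fun t => Iff.rfl
  have hT1 : ((l e0 : ℤ)) ∈ T := by
    rw [hmemT]
    exact ⟨0, fun e _ => by simp, by simp⟩
  obtain ⟨g, hg⟩ := Int.subgroup_cyclic T
  have hmem : ∀ x : ℤ, x ∈ T ↔ g ∣ x := by
    intro x
    rw [hg, AddSubgroup.mem_closure_singleton]
    constructor
    · rintro ⟨n, hn⟩; exact ⟨n, by rw [← hn, smul_eq_mul]; ring⟩
    · rintro ⟨n, hn⟩; exact ⟨n, by rw [hn, smul_eq_mul]; ring⟩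
  have hgl : g ∣ (l e0 : ℤ) := (hmem _).mp hT1
  have hgne : g ≠ 0 := by
    intro h
    rw [h] at hgl
    have : (l e0 : ℤ) = 0 := zero_dvd_iff.mp hgl
    have := hl e0
    omega
  have hg1 : g ∣ 1 := by
    by_cases hd : g.natAbs = 1
    · rcases Int.natAbs_eq_iff.mp hd with h | h <;> rw [h] <;> simp
    · exfalso
      obtain ⟨p, hp, hpd⟩ := Nat.exists_prime_and_dvd hd
      have hpg : (p : ℤ) ∣ g := by
        have h1 : (p : ℤ) ∣ (g.natAbs : ℤ) := Int.natCast_dvd_natCast.mpr hpd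
        exact h1.trans (Int.natAbs_dvd.mpr dvd_rfl)
      have hple : p ∣ l e0 := by
        have : (p : ℤ) ∣ (l e0 : ℤ) := hpg.trans hgl
        exact_mod_cast this
      obtain ⟨cc, hcc', φ, hφ1, hφ2⟩ := key_lemma G l hcc hl e0 p hp hple
      have : cc ∈ T := by
        rw [hmemT]
        exact ⟨φ, hφ1, by rw [hφ2]; simp⟩
      exact hcc' (hpg.trans ((hmem _).mp this))
  have h1T : (1 : ℤ) ∈ T := (hmem 1).mpr hg1
  rw [hmemT] at h1T
  exact h1T

lemma eta_surj (hcc : G.CircuitCoprime l) (hl : ∀ e, 1 ≤ l e) (c : E → ℤ) :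
    ∃ φ : V → ℤ, ∀ e, (l e : ℤ) ∣ (φ (G.s e) - φ (G.t e) - c e) := by
  choose φe hφe1 hφe2 using exists_unit G l hcc hl
  refine ⟨fun u => ∑ e', c e' * φe e' u, fun e => ?_⟩
  have h1 : (∑ e', c e' * φe e' (G.s e)) - (∑ e', c e' * φe e' (G.t e)) =
      ∑ e', c e' * (φe e' (G.s e) - φe e' (G.t e)) := by
    rw [← Finset.sum_sub_distrib]
    exact Finset.sum_congr rfl fun e' _ => by ring
  have h2 : ∑ e', c e' * (φe e' (G.s e) - φe e' (G.t e)) =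
      c e * (φe e (G.s e) - φe e (G.t e)) +
        ∑ e' ∈ Finset.univ.erase e, c e' * (φe e' (G.s e) - φe e' (G.t e)) :=
    (Finset.add_sum_erase _ _ (Finset.mem_univ e)).symm
  have h3 : (fun u => ∑ e', c e' * φe e' u) (G.s e) - (fun u => ∑ e', c e' * φe e' u) (G.t e)
      - c e = c e * (φe e (G.s e) - φe e (G.t e) - 1) +
        ∑ e' ∈ Finset.univ.erase e, c e' * (φe e' (G.s e) - φe e' (G.t e)) := by
    simp only
    rw [h1, h2]; ring
  rw [h3]
  apply dvd_add
  · exact (hφe2 e).mul_left _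
  · apply Finset.dvd_sum
    intro e' he'
    have hne : e ≠ e' := (Finset.ne_of_mem_erase he').symm
    exact ((hφe1 e' e hne).mul_left _)

end Stmt11
namespace Stmt11

variable {V E : Type*} [Fintype V] [Fintype E] [DecidableEq V] [DecidableEq E]
  (G : Multigraph V E) (l : E → ℕ)

lemma partA (hcc : G.CircuitCoprime l) (hl : ∀ e, 1 ≤ l e)
    (β : (V ⊕ Σ e : E, Fin (l e - 1)) → ℤ) :
    ∃ (α : V → ℤ) (ψ : (V ⊕ Σ e : E, Fin (l e - 1)) → ℤ),
      β = Sum.elim α (fun _ => 0) + (G.blowup l).mdeg (fun _ => 1) ψ := by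
  classical
  set b : (e : E) → ℕ → ℤ := fun e t =>
    if h : 1 ≤ t ∧ t ≤ l e - 1 then β (Sum.inr ⟨e, ⟨t - 1, by omega⟩⟩) else 0 with hbdef
  set g : (e : E) → ℕ → ℤ := fun e j => ∑ t ∈ Finset.range j, ((j : ℤ) - t) * b e t with hgdef
  set c : E → ℤ := fun e => g e (l e) with hcdef
  obtain ⟨φ, hφ⟩ := eta_surj G l hcc hl (fun e => - c e)
  have hdvd : ∀ e, (l e : ℤ) ∣ (φ (G.t e) - φ (G.s e) - c e) := by
    intro e
    have h1 := hφ e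
    have h2 : φ (G.t e) - φ (G.s e) - c e = -(φ (G.s e) - φ (G.t e) - (- c e)) := by ring
    rw [h2]
    exact dvd_neg.mpr h1
  set d0 : E → ℤ := fun e => (φ (G.t e) - φ (G.s e) - c e) / (l e : ℤ) with hd0def
  have hd0 : ∀ e, (l e : ℤ) * d0 e = φ (G.t e) - φ (G.s e) - c e := fun e =>
    Int.mul_ediv_cancel' (hdvd e)
  set Φ : (e : E) → ℕ → ℤ := fun e j => φ (G.s e) + (j : ℤ) * d0 e + g e j with hΦdef
  have hgdiff : ∀ e j, g e (j + 1) - g e j = ∑ t ∈ Finset.range (j + 1), b e t := by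
    intro e j
    have h1 : g e (j + 1) = ∑ t ∈ Finset.range (j + 1), (((j : ℤ) - t) * b e t + b e t) := by
      rw [hgdef]
      refine Finset.sum_congr rfl fun t ht => ?_
      push_cast
      ring
    have h2 : ∑ t ∈ Finset.range (j + 1), ((j : ℤ) - t) * b e t = g e j := by
      rw [Finset.sum_range_succ, hgdef]
      simp
    rw [h1, Finset.sum_add_distrib, h2]
    ring
  have hΦdd : ∀ e k, Φ e k - 2 * Φ e (k + 1) + Φ e (k + 2) = b e (k + 1) := by
    intro e k
    have h1 := hgdiff e (k + 1)
    have h2 := hgdiff e k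
    have h3 : Φ e k - 2 * Φ e (k + 1) + Φ e (k + 2) =
        (g e (k + 2) - g e (k + 1)) - (g e (k + 1) - g e k) := by
      rw [hΦdef]
      push_cast
      ring
    rw [h3, h1, h2, Finset.sum_range_succ]
    ring
  have hΦ0 : ∀ e, Φ e 0 = φ (G.s e) := by
    intro e
    have h3 : Φ e 0 = φ (G.s e) + ((0:ℕ) : ℤ) * d0 e + g e 0 := rfl
    have h4 : g e 0 = 0 := by rw [hgdef]; simp
    rw [h3, h4]
    push_cast
    ring
  have hΦn : ∀ e, Φ e (l e) = φ (G.t e) := by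
    intro e
    have h1 := hd0 e
    have h2 : c e = g e (l e) := rfl
    have h3 : Φ e (l e) = φ (G.s e) + (l e : ℤ) * d0 e + g e (l e) := rfl
    rw [h3, ← h2]
    linarith
  set ψ : (V ⊕ Σ e : E, Fin (l e - 1)) → ℤ :=
    Sum.elim φ (fun q => Φ q.1 (q.2.1 + 1)) with hψdef
  have hψP : ∀ e j, j ≤ l e → ψ (G.pathVertex l e j) = Φ e j := by
    intro e j hj
    by_cases h0 : j = 0
    · rw [h0, path_zero]
      rw [hψdef]
      simp only [Sum.elim_inl]
      rw [hΦ0]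
    · by_cases hj2 : j < l e
      · have hpath : G.pathVertex l e j = Sum.inr ⟨e, ⟨j - 1, by omega⟩⟩ := by
          simp only [Multigraph.pathVertex]
          rw [dif_neg h0, dif_pos hj2]
        rw [hpath, hψdef]
        simp only [Sum.elim_inr]
        rw [show j - 1 + 1 = j by omega]
      · rw [show j = l e by omega, path_last G l e (hl e), hψdef]
        simp only [Sum.elim_inl]
        rw [hΦn]
  have hlapβ : ∀ (e : E) (k : Fin (l e - 1)),
      Lap G l ψ (Sum.inr ⟨e, k⟩) = β (Sum.inr ⟨e, k⟩) := by
    intro e k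
    have hk := k.isLt
    have hle := hl e
    rw [lap_interior, hψP e k.1 (by omega), hψP e (k.1 + 1) (by omega),
      hψP e (k.1 + 2) (by omega), hΦdd]
    rw [hbdef]
    simp only
    rw [dif_pos (by constructor <;> omega)]
    exact congrArg (fun x => β (Sum.inr ⟨e, x⟩)) (Fin.ext (by omega : k.1 + 1 - 1 = k.1))
  refine ⟨fun u => β (Sum.inl u) - Lap G l ψ (Sum.inl u), ψ, ?_⟩
  funext u
  cases u with
  | inl u =>
    show β (Sum.inl u) = (β (Sum.inl u) - Lap G l ψ (Sum.inl u)) + Lap G l ψ (Sum.inl u)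
    ring
  | inr q =>
    obtain ⟨e, k⟩ := q
    show β (Sum.inr ⟨e, k⟩) = 0 + Lap G l ψ (Sum.inr ⟨e, k⟩)
    rw [hlapβ, zero_add]

end Stmt11

/-- Let `(G,l)` be a finite connected `ℕ`-labelled graph.  The
extension-by-zero map `ε̄ : coker δ → coker δ̃` (from the cokernel of the multidegree
operator of `(G,l)` to the cokernel of the Laplacian of the total blow-up graph) is an
isomorphism — i.e. it is surjective and injective — if and only if `(G,l)` is
circuit-coprime. -/
theorem statement11 {V E : Type*} [Fintype V] [Fintype E] [DecidableEq V] [DecidableEq E]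
    (G : Multigraph V E) (hG : G.Connected)
    (l : E → ℕ) (hl : ∀ e, 1 ≤ l e) :
    ((∀ β : (V ⊕ Σ e : E, Fin (l e - 1)) → ℤ,
        ∃ (α : V → ℤ) (ψ : (V ⊕ Σ e : E, Fin (l e - 1)) → ℤ),
          β = Sum.elim α (fun _ => 0) + (G.blowup l).mdeg (fun _ => 1) ψ) ∧
      (∀ α : V → ℤ,
        (∃ ψ : (V ⊕ Σ e : E, Fin (l e - 1)) → ℤ,
          (G.blowup l).mdeg (fun _ => 1) ψ = Sum.elim α (fun _ => 0)) →
        ∃ φ : V → ℤ, G.Cartier l φ ∧ G.mdeg l φ = α))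
      ↔ G.CircuitCoprime l := by
  constructor
  · rintro ⟨h1, _⟩
    exact Stmt11.forward_dir G l hl h1
  · intro hcc
    refine ⟨Stmt11.partA G l hcc hl, ?_⟩
    rintro α ⟨ψ, hψ⟩
    exact Stmt11.partB G l hl α ψ hψ
end

section
/- Let (G̃,l̃) be the total blow-up of an ℕ-labelled graph (G,l), and let P be the path in G̃ replacing an edge e of G, with vertices w_0, w_1, …, w_{l(e)} in order. For 1 ≤ i ≤ l(e) let α_i = χ_{w_i} − χ_{w_0} ∈ ℤ^Ṽ. Then in the cokernel H̃ of the Laplacian δ̃ of G̃, the classes satisfy k·[α_1] = [α_k] for all 1 ≤ k ≤ l(e). -/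
namespace Statement12Aux

/-- The potential value at the `j`-th path vertex. -/
def Fk (k j : ℕ) : ℤ := if j = 0 then 0 else if j ≤ k then (j : ℤ) - k else 0

lemma key (c : ℕ → ℤ) (n : ℕ) :
    ∀ k, 1 ≤ k → k ≤ n →
      ∑ i ∈ Finset.range n, (Fk k (i + 1) - Fk k i) * (c i - c (i + 1))
        = (k : ℤ) * (c 1 - c 0) - (c k - c 0) := by
  intro k hk1
  induction k, hk1 using Nat.le_induction with
  | base =>
    intro h1
    have hz : ∀ i ∈ Finset.range n,
        (Fk 1 (i + 1) - Fk 1 i) * (c i - c (i + 1)) = 0 := by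
      intro i _
      have : Fk 1 (i + 1) - Fk 1 i = 0 := by
        simp only [Fk]; split_ifs <;> push_cast <;> omega
      rw [this, zero_mul]
    rw [Finset.sum_eq_zero hz]
    push_cast; ring
  | succ k hk ih =>
    intro hkn
    have ih' := ih (by omega)
    have hsplit : ∀ i ∈ Finset.range n,
        (Fk (k + 1) (i + 1) - Fk (k + 1) i) * (c i - c (i + 1))
          = (Fk k (i + 1) - Fk k i) * (c i - c (i + 1))
            + ((if i = 0 then c 1 - c 0 else 0) + (if i = k then c k - c (k + 1) else 0)) := by
      intro i _
      have hcoef : Fk (k + 1) (i + 1) - Fk (k + 1) i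
          = (Fk k (i + 1) - Fk k i) + ((if i = 0 then (-1 : ℤ) else 0) + (if i = k then 1 else 0)) := by
        simp only [Fk]; split_ifs <;> (try contradiction) <;> push_cast <;> omega
      rw [hcoef]
      split_ifs with h0 hkk hkk
      · omega
      · subst h0; ring
      · subst hkk; ring
      · ring
    rw [Finset.sum_congr rfl hsplit, Finset.sum_add_distrib, Finset.sum_add_distrib,
      Finset.sum_ite_eq' (Finset.range n) 0 (fun _ => c 1 - c 0),
      Finset.sum_ite_eq' (Finset.range n) k (fun _ => c k - c (k + 1)), ih']
    have h0mem : (0 : ℕ) ∈ Finset.range n := Finset.mem_range.mpr (by omega)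
    have hkmem : k ∈ Finset.range n := Finset.mem_range.mpr (by omega)
    rw [if_pos h0mem, if_pos hkmem]
    push_cast; ring

/-- The explicit potential function. -/
def psi {V E : Type*} [DecidableEq E] (l : E → ℕ) (e : E) (k : ℕ) :
    (V ⊕ Σ e' : E, Fin (l e' - 1)) → ℤ
  | Sum.inl _ => 0
  | Sum.inr ⟨e', i⟩ => if e' = e then Fk k (i.1 + 1) else 0

@[simp] lemma psi_inl {V E : Type*} [DecidableEq E] (l : E → ℕ) (e : E) (k : ℕ) (v : V) :
    psi l e k (Sum.inl v) = 0 := rfl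

@[simp] lemma psi_inr {V E : Type*} [DecidableEq E] (l : E → ℕ) (e : E) (k : ℕ)
    (e' : E) (i : Fin (l e' - 1)) :
    psi (V := V) l e k (Sum.inr ⟨e', i⟩) = if e' = e then Fk k (i.1 + 1) else 0 := rfl

end Statement12Aux

/-- Let `(G̃,l̃)` be the total blow-up of `(G,l)` and let
`w_0, w_1, …, w_(l e)` be the path in `G̃` replacing an edge `e` of `G`.  For
`1 ≤ i ≤ l e` set `α_i = χ_(w_i) - χ_(w_0)`.  Then in the cokernel `H̃` of the Laplacian
`δ̃` of `G̃` one has `k·[α_1] = [α_k]` for all `1 ≤ k ≤ l e`, i.e. `k • α_1 - α_k` lies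
in the image of `δ̃`. -/
theorem statement12 {V E : Type*} [Fintype V] [Fintype E] [DecidableEq V] [DecidableEq E]
    (G : Multigraph V E) (hG : G.Connected)
    (l : E → ℕ) (hl : ∀ e, 1 ≤ l e)
    (e : E) (k : ℕ) (hk1 : 1 ≤ k) (hk2 : k ≤ l e) :
    ∃ ψ : (V ⊕ Σ e : E, Fin (l e - 1)) → ℤ,
      (G.blowup l).mdeg (fun _ => 1) ψ = fun u =>
        (k : ℤ) * (chi (G.pathVertex l e 1) u - chi (G.pathVertex l e 0) u) -
          (chi (G.pathVertex l e k) u - chi (G.pathVertex l e 0) u) := by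
  classical
  refine ⟨Statement12Aux.psi l e k, ?_⟩
  funext u
  have hle : 1 ≤ l e := le_trans hk1 hk2
  have hpsi : ∀ j, j ≤ l e →
      Statement12Aux.psi (V := V) l e k (G.pathVertex l e j) = Statement12Aux.Fk k j := by
    intro j hj
    unfold Multigraph.pathVertex
    split_ifs with h0 h1
    · subst h0; simp [Statement12Aux.Fk]
    · simp only [Statement12Aux.psi_inr, if_pos rfl]
      exact congrArg (Statement12Aux.Fk k) (Nat.succ_pred_eq_of_pos (Nat.pos_of_ne_zero h0))
    · simp only [Statement12Aux.psi_inl, Statement12Aux.Fk]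
      split_ifs <;> push_cast <;> omega
  have hs : ∀ i : Fin (l e), (G.blowup l).s ⟨e, i⟩ = G.pathVertex l e i.1 := by
    intro i
    have hi : i.1 < l e := i.2
    simp only [Multigraph.blowup, Multigraph.pathVertex]
    split_ifs <;> first | rfl | contradiction | (exfalso; omega)
  have ht : ∀ i : Fin (l e), (G.blowup l).t ⟨e, i⟩ = G.pathVertex l e (i.1 + 1) := by
    intro i
    have hi : i.1 < l e := i.2
    simp only [Multigraph.blowup, Multigraph.pathVertex]
    split_ifs <;> first | rfl | contradiction | (exfalso; omega)
  have hzero : ∀ (e' : E), e' ≠ e → ∀ i : Fin (l e'),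
      Statement12Aux.psi (V := V) l e k ((G.blowup l).s ⟨e', i⟩) = 0 ∧
        Statement12Aux.psi (V := V) l e k ((G.blowup l).t ⟨e', i⟩) = 0 := by
    intro e' hne i
    constructor <;>
      (simp only [Multigraph.blowup]; split_ifs <;>
        simp [Statement12Aux.psi_inl, Statement12Aux.psi_inr, hne])
  simp only [Multigraph.mdeg, Nat.cast_one, Int.ediv_one]
  rw [← Finset.univ_sigma_univ, Finset.sum_sigma]
  rw [Finset.sum_eq_single_of_mem e (Finset.mem_univ e)]
  swap
  · intro e' _ hne
    apply Finset.sum_eq_zero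
    intro i _
    rw [(hzero e' hne i).1, (hzero e' hne i).2]
    simp
  have hterm : ∀ i : Fin (l e),
      ((if (G.blowup l).s ⟨e, i⟩ = u then
          Statement12Aux.psi (V := V) l e k ((G.blowup l).t ⟨e, i⟩) -
            Statement12Aux.psi (V := V) l e k ((G.blowup l).s ⟨e, i⟩) else 0) +
        (if (G.blowup l).t ⟨e, i⟩ = u then
          Statement12Aux.psi (V := V) l e k ((G.blowup l).s ⟨e, i⟩) -
            Statement12Aux.psi (V := V) l e k ((G.blowup l).t ⟨e, i⟩) else 0))
      = (Statement12Aux.Fk k (i.1 + 1) - Statement12Aux.Fk k i.1) *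
          (chi (G.pathVertex l e i.1) u - chi (G.pathVertex l e (i.1 + 1)) u) := by
    intro i
    have hi : i.1 < l e := i.2
    rw [hs i, ht i, hpsi i.1 (by omega), hpsi (i.1 + 1) (by omega)]
    by_cases h1 : G.pathVertex l e (i.1 : ℕ) = u <;>
      by_cases h2 : G.pathVertex l e (i.1 + 1) = u <;>
        simp [chi, h1, h2, Ne.symm, eq_comm] <;> ring
  rw [Finset.sum_congr rfl (fun i _ => hterm i)]
  rw [Fin.sum_univ_eq_sum_range (fun j => (Statement12Aux.Fk k (j + 1) - Statement12Aux.Fk k j) *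
    (chi (G.pathVertex l e j) u - chi (G.pathVertex l e (j + 1)) u)) (l e)]
  exact Statement12Aux.key (fun j => chi (G.pathVertex l e j) u) (l e) k hk1 hk2
end
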